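/- (The Diffusion Duality, token level.) Fix an integer K ≥ 2, an index k : Fin K, and ᾱ ∈ [0,1). Let μ_k = N(ᾱ e_k, (1−ᾱ²) I_K) and let A : ℝ^K → Fin K send w to the least index attaining max_i w_i. Then the pushforward measure A_* μ_k on Fin K assigns to each singleton {i} the mass 𝒯(ᾱ)·(if i = k then 1 else 0) + (1 − 𝒯(ᾱ))/K; that is, argmax transforms the Gaussian marginal N(ᾱ e_k, (1−ᾱ²) I_K) into the Uniform-state categorical marginal Cat(𝒯(ᾱ)·e_k + (1 − 𝒯(ᾱ))·𝟙/K). -/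

import Mathlib

open MeasureTheory ProbabilityTheory
open scoped NNReal ENNReal Real

/-- The standard normal density `φ(z) = exp(-z²/2)/√(2π)`. -/
noncomputable def stdGaussianPDF (z : ℝ) : ℝ :=
  Real.exp (-z ^ 2 / 2) / Real.sqrt (2 * Real.pi)

/-- The standard normal cumulative distribution function `Φ(z) = ∫_{-∞}^z φ(u) du`. -/
noncomputable def stdGaussianCDF (z : ℝ) : ℝ :=
  ∫ u in Set.Iic z, stdGaussianPDF u

/-- The diffusion transformation operator
`𝒯(ᾱ) = (K/(K-1)) (∫_ℝ φ(z - ᾱ/√(1-ᾱ²)) Φ(z)^{K-1} dz - 1/K)`. -/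
noncomputable def diffTransform (K : ℕ) (α : ℝ) : ℝ :=
  ((K : ℝ) / ((K : ℝ) - 1)) *
    ((∫ z : ℝ, stdGaussianPDF (z - α / Real.sqrt (1 - α ^ 2))
        * stdGaussianCDF z ^ (K - 1)) - 1 / (K : ℝ))

/-- The least index attaining the maximum of `w : Fin K → ℝ`. -/
noncomputable def argmaxIdx {K : ℕ} [NeZero K] (w : Fin K → ℝ) : Fin K :=
  (Finset.univ.filter fun i => ∀ j, w j ≤ w i).min' (by
    obtain ⟨i, -, hi⟩ :=
      Finset.exists_max_image (Finset.univ : Finset (Fin K)) w Finset.univ_nonempty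
    exact ⟨i, Finset.mem_filter.mpr ⟨Finset.mem_univ i, fun j => hi j (Finset.mem_univ j)⟩⟩)

lemma stdGaussianPDF_eq : stdGaussianPDF = gaussianPDFReal 0 1 := by
  ext x
  simp [stdGaussianPDF, gaussianPDFReal, div_eq_inv_mul, mul_comm]

lemma stdGaussianPDF_nonneg (z : ℝ) : 0 ≤ stdGaussianPDF z := by
  rw [stdGaussianPDF_eq]; exact gaussianPDFReal_nonneg 0 1 z

lemma integrable_stdGaussianPDF : Integrable stdGaussianPDF := by
  rw [stdGaussianPDF_eq]; exact integrable_gaussianPDFReal 0 1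

lemma stdGaussianCDF_mono : Monotone stdGaussianCDF := by
  intro a b hab
  exact setIntegral_mono_set integrable_stdGaussianPDF.integrableOn
    (ae_of_all _ stdGaussianPDF_nonneg) (HasSubset.Subset.eventuallyLE (Set.Iic_subset_Iic.2 hab))

lemma stdGaussianCDF_measurable : Measurable stdGaussianCDF :=
  stdGaussianCDF_mono.measurable

lemma stdGaussianCDF_nonneg (z : ℝ) : 0 ≤ stdGaussianCDF z :=
  integral_nonneg fun _ => stdGaussianPDF_nonneg _

lemma stdGaussianCDF_le_one (z : ℝ) : stdGaussianCDF z ≤ 1 := by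
  have h1 : ∫ u, stdGaussianPDF u = 1 := by
    rw [stdGaussianPDF_eq]; exact integral_gaussianPDFReal_eq_one 0 one_ne_zero
  rw [stdGaussianCDF, ← h1]
  exact setIntegral_le_integral integrable_stdGaussianPDF (ae_of_all _ stdGaussianPDF_nonneg)

lemma gaussianReal_Iic (z : ℝ) :
    gaussianReal 0 1 (Set.Iic z) = ENNReal.ofReal (stdGaussianCDF z) := by
  rw [gaussianReal_apply_eq_integral 0 one_ne_zero, stdGaussianCDF, stdGaussianPDF_eq]

lemma gaussianReal_noAtoms' {μ : ℝ} {v : ℝ≥0} (h : v ≠ 0) :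
    NoAtoms (gaussianReal μ v) :=
  ⟨fun x => (gaussianReal_absolutelyContinuous μ h) (measure_singleton x)⟩

lemma gaussianReal_eq_map (μ : ℝ) {v : ℝ≥0} (hv : v ≠ 0) :
    gaussianReal μ v
      = (gaussianReal 0 1).map (fun x => Real.sqrt v * x + μ) := by
  have h1 : (gaussianReal 0 1).map (fun x => Real.sqrt v * x)
      = gaussianReal 0 v := by
    rw [gaussianReal_map_const_mul]
    congr 1
    · ring
    · ext
      simp [Real.sq_sqrt (v.coe_nonneg)]
  have : (fun x => Real.sqrt v * x + μ)
      = (fun x => x + μ) ∘ (fun x => Real.sqrt v * x) := rfl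
  rw [this, ← Measure.map_map (measurable_add_const μ) (measurable_const_mul _), h1,
    gaussianReal_map_add_const, zero_add]

lemma gaussianReal_Iio (μ : ℝ) {v : ℝ≥0} (hv : v ≠ 0) (t : ℝ) :
    gaussianReal μ v (Set.Iio t)
      = ENNReal.ofReal (stdGaussianCDF ((t - μ) / Real.sqrt v)) := by
  have hσ : (0:ℝ) < Real.sqrt v := Real.sqrt_pos.2 (by exact_mod_cast (zero_le (a := v)).lt_of_ne (Ne.symm hv))
  rw [gaussianReal_eq_map μ hv, Measure.map_apply (by fun_prop) measurableSet_Iio]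
  have hpre : (fun x => Real.sqrt v * x + μ) ⁻¹' Set.Iio t
      = Set.Iio ((t - μ) / Real.sqrt v) := by
    ext x
    simp only [Set.mem_preimage, Set.mem_Iio]
    rw [lt_div_iff₀ hσ, mul_comm]
    constructor <;> intro h <;> linarith
  rw [hpre]
  haveI : NullSingletonClass (gaussianReal (0:ℝ) (1:ℝ≥0)) := gaussianReal_noAtoms' one_ne_zero
  rw [← gaussianReal_Iic]
  exact measure_congr Iio_ae_eq_Iic

variable {n : ℕ} (ν : Fin (n + 1) → Measure ℝ) [∀ j, IsProbabilityMeasure (ν j)]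

/-- The strict-domination set. -/
def domSet {K : ℕ} (i : Fin K) : Set (Fin K → ℝ) := {w | ∀ j, j ≠ i → w j < w i}

lemma measurableSet_domSet {K : ℕ} (i : Fin K) : MeasurableSet (domSet i) := by
  have : domSet i = ⋂ j, ⋂ (_ : j ≠ i), {w : Fin K → ℝ | w j < w i} := by
    ext w; simp [domSet]
  rw [this]
  exact MeasurableSet.iInter fun j => MeasurableSet.iInter fun _ =>
    measurableSet_lt (measurable_pi_apply j) (measurable_pi_apply i)

lemma pi_domSet_eq (p : Fin (n + 1)) :
    Measure.pi ν (domSet p)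
      = ∫⁻ t, ∏ j : Fin n, ν (p.succAbove j) (Set.Iio t) ∂(ν p) := by
  have hmp := measurePreserving_piFinSuccAbove ν p
  set e := MeasurableEquiv.piFinSuccAbove (fun _ : Fin (n+1) => ℝ) p
  have hS : MeasurableSet {q : ℝ × (Fin n → ℝ) | ∀ j, q.2 j < q.1} := by
    have : {q : ℝ × (Fin n → ℝ) | ∀ j, q.2 j < q.1}
        = ⋂ j, {q : ℝ × (Fin n → ℝ) | q.2 j < q.1} := by ext q; simp
    rw [this]
    exact MeasurableSet.iInter fun j =>
      measurableSet_lt (by fun_prop) measurable_fst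
  have hpre : e ⁻¹' {q : ℝ × (Fin n → ℝ) | ∀ j, q.2 j < q.1} = domSet p := by
    ext w
    simp only [Set.mem_preimage, Set.mem_setOf_eq, domSet, e,
      MeasurableEquiv.piFinSuccAbove_apply, Fin.insertNthEquiv, Equiv.coe_fn_symm_mk, Fin.removeNth]
    constructor
    · intro h j hj
      obtain ⟨j', rfl⟩ := Fin.exists_succAbove_eq hj
      exact h j'
    · intro h j
      exact h _ (Fin.succAbove_ne p j)
  rw [← hpre, hmp.measure_preimage hS.nullMeasurableSet, Measure.prod_apply hS]
  congr 1
  ext t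
  have : (Prod.mk t ⁻¹' {q : ℝ × (Fin n → ℝ) | ∀ j, q.2 j < q.1})
      = Set.pi Set.univ (fun _ : Fin n => Set.Iio t) := by
    ext v; simp [Set.mem_pi]
  rw [this, Measure.pi_pi]

lemma pi_tie_null [∀ j, NullSingletonClass (ν j)] {a b : Fin (n + 1)} (hab : a ≠ b) :
    Measure.pi ν {w | w a = w b} = 0 := by
  have hmp := measurePreserving_piFinSuccAbove ν a
  set e := MeasurableEquiv.piFinSuccAbove (fun _ : Fin (n+1) => ℝ) a
  obtain ⟨j₁, rfl⟩ := Fin.exists_succAbove_eq (Ne.symm hab)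
  have hS : MeasurableSet {q : ℝ × (Fin n → ℝ) | q.2 j₁ = q.1} :=
    measurableSet_eq_fun (by fun_prop) measurable_fst
  have hpre : e ⁻¹' {q : ℝ × (Fin n → ℝ) | q.2 j₁ = q.1} = {w | w a = w (a.succAbove j₁)} := by
    ext w
    simp only [Set.mem_preimage, Set.mem_setOf_eq, e,
      MeasurableEquiv.piFinSuccAbove_apply, Fin.insertNthEquiv, Equiv.coe_fn_symm_mk, Fin.removeNth]
    exact eq_comm
  rw [← hpre, hmp.measure_preimage hS.nullMeasurableSet, Measure.prod_apply hS]
  have : ∀ t : ℝ, (Measure.pi fun j => ν (a.succAbove j))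
      (Prod.mk t ⁻¹' {q : ℝ × (Fin n → ℝ) | q.2 j₁ = q.1}) = 0 := by
    intro t
    have h1 : (Prod.mk t ⁻¹' {q : ℝ × (Fin n → ℝ) | q.2 j₁ = q.1})
        = Set.pi Set.univ (fun j : Fin n => if j = j₁ then {t} else Set.univ) := by
      ext v
      simp only [Set.mem_preimage, Set.mem_setOf_eq, Set.mem_pi, Set.mem_univ, true_implies]
      constructor
      · intro h j
        by_cases hj : j = j₁ <;> simp [hj, h]
      · intro h
        have := h j₁
        simpa using this
    rw [h1, Measure.pi_pi]
    refine Finset.prod_eq_zero (Finset.mem_univ j₁) ?_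
    simp
  simp only [this]
  simp

lemma argmaxIdx_eq_of_mem_domSet {K : ℕ} [NeZero K] {w : Fin K → ℝ} {i : Fin K}
    (hw : w ∈ domSet i) : argmaxIdx w = i := by
  have hfil : (Finset.univ.filter fun i' => ∀ j, w j ≤ w i') = {i} := by
    ext i'
    simp only [Finset.mem_filter, Finset.mem_univ, true_and, Finset.mem_singleton]
    constructor
    · intro h
      by_contra hne
      exact absurd (h i) (not_le.2 (hw i' hne))
    · rintro rfl j
      rcases eq_or_ne j i' with rfl | hj
      · exact le_refl _
      · exact (hw j hj).le
  rw [argmaxIdx]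
  simp only [hfil]
  simp
lemma argmaxIdx_mem_domSet {K : ℕ} [NeZero K] {w : Fin K → ℝ}
    (hw : ∀ a b : Fin K, a ≠ b → w a ≠ w b) : w ∈ domSet (argmaxIdx w) := by
  have hmem : argmaxIdx w ∈ Finset.univ.filter fun i => ∀ j, w j ≤ w i :=
    Finset.min'_mem _ _
  rw [Finset.mem_filter] at hmem
  intro j hj
  exact lt_of_le_of_ne (hmem.2 j) (hw j _ hj)

lemma measurable_argmaxIdx {K : ℕ} [NeZero K] : Measurable (argmaxIdx (K := K)) := by
  apply measurable_to_countable'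
  intro i
  have : argmaxIdx ⁻¹' {i}
      = {w : Fin K → ℝ | i ∈ Finset.univ.filter fun i' => ∀ j, w j ≤ w i'} ∩
        ⋂ (i' : Fin K), ⋂ (_ : i' < i),
          {w : Fin K → ℝ | i' ∈ Finset.univ.filter fun i'' => ∀ j, w j ≤ w i''}ᶜ := by
    ext w
    simp only [Set.mem_preimage, Set.mem_singleton_iff, Set.mem_inter_iff, Set.mem_setOf_eq,
      Set.mem_iInter, Set.mem_compl_iff, argmaxIdx]
    constructor
    · rintro rfl
      exact ⟨Finset.min'_mem _ _, fun i' hlt hmem =>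
        absurd (Finset.min'_le _ _ hmem) (not_le.2 hlt)⟩
    · rintro ⟨hmem, hlt⟩
      refine le_antisymm (Finset.min'_le _ _ hmem) ?_
      by_contra h
      push_neg at h
      exact hlt _ h (Finset.min'_mem _ _)
  rw [this]
  have hP : ∀ i' : Fin K, MeasurableSet
      {w : Fin K → ℝ | i' ∈ Finset.univ.filter fun i'' => ∀ j, w j ≤ w i''} := by
    intro i'
    have : {w : Fin K → ℝ | i' ∈ Finset.univ.filter fun i'' => ∀ j, w j ≤ w i''}
        = ⋂ j, {w : Fin K → ℝ | w j ≤ w i'} := by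
      ext w; simp
    rw [this]
    exact MeasurableSet.iInter fun j =>
      measurableSet_le (measurable_pi_apply j) (measurable_pi_apply i')
  exact (hP i).inter (MeasurableSet.iInter fun i' => MeasurableSet.iInter fun _ => (hP i').compl)

lemma pi_domSet_perm {K : ℕ} (ν : Fin K → Measure ℝ) [∀ j, SigmaFinite (ν j)]
    (f : Fin K ≃ Fin K) (hν : ∀ j, ν (f j) = ν j) (i : Fin K) :
    Measure.pi ν (domSet (f i)) = Measure.pi ν (domSet i) := by
  have hmp := measurePreserving_piCongrLeft ν f
  have hνf : (Measure.pi fun j => ν (f j)) = Measure.pi ν := by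
    congr 1; ext j; rw [hν]
  rw [hνf] at hmp
  set e := MeasurableEquiv.piCongrLeft (fun _ : Fin K => ℝ) f with he
  have happ : ∀ (w : Fin K → ℝ) (a : Fin K), e w (f a) = w a := by
    intro w a
    simp [he, MeasurableEquiv.piCongrLeft, Equiv.piCongrLeft_apply_apply]
  have hpre : e ⁻¹' domSet (f i) = domSet i := by
    ext w
    simp only [Set.mem_preimage, domSet, Set.mem_setOf_eq]
    constructor
    · intro h a ha
      have := h (f a) (fun hc => ha (f.injective hc))
      rwa [happ, happ] at this
    · intro h j hj
      obtain ⟨a, rfl⟩ : ∃ a, f a = j := ⟨f.symm j, f.apply_symm_apply j⟩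
      rw [happ, happ]
      exact h a fun hc => hj (congrArg f hc)
  rw [← hpre, hmp.measure_preimage (measurableSet_domSet _).nullMeasurableSet]

section main
variable {α : ℝ} {n : ℕ}
variable (hα0 : 0 ≤ α) (hα1 : α < 1)
include hα0 hα1

lemma var_pos : (0:ℝ) < 1 - α ^ 2 := by nlinarith [hα0, hα1]

lemma var_ne_zero : (Real.toNNReal (1 - α ^ 2)) ≠ 0 := by
  simp only [ne_eq, Real.toNNReal_eq_zero, not_le]
  exact var_pos hα0 hα1

lemma sqrt_var_pos : (0:ℝ) < Real.sqrt (1 - α ^ 2) := Real.sqrt_pos.2 (var_pos hα0 hα1)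

lemma coe_var : ((Real.toNNReal (1 - α ^ 2)) : ℝ) = 1 - α ^ 2 :=
  Real.coe_toNNReal _ (var_pos hα0 hα1).le

omit hα0 hα1 in
lemma stdGaussianPDF_sub (m z : ℝ) : stdGaussianPDF (z - m) = gaussianPDFReal m 1 z := by
  simp [stdGaussianPDF, gaussianPDFReal, div_eq_inv_mul, mul_comm]

-- the integrand for the pivot-k computation
lemma integrand_key (t : ℝ) :
    gaussianPDFReal α (Real.toNNReal (1 - α ^ 2)) t
        * stdGaussianCDF (t / Real.sqrt (1 - α ^ 2)) ^ (n : ℕ)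
      = (Real.sqrt (1 - α ^ 2))⁻¹ *
        ((fun z => stdGaussianPDF (z - α / Real.sqrt (1 - α ^ 2)) * stdGaussianCDF z ^ (n : ℕ))
          (t / Real.sqrt (1 - α ^ 2))) := by
  have hσ := sqrt_var_pos hα0 hα1
  set σ := Real.sqrt (1 - α ^ 2) with hσdef
  simp only [stdGaussianPDF_sub]
  have h1 : gaussianPDFReal (α / σ) 1 (σ⁻¹ * t)
      = |σ| * gaussianPDFReal (σ * (α / σ)) (⟨σ^2, sq_nonneg _⟩ * 1) t :=
    gaussianPDFReal_inv_mul hσ.ne' t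
  have h2 : σ * (α / σ) = α := by field_simp
  have h3 : (⟨σ^2, sq_nonneg _⟩ * 1 : ℝ≥0) = Real.toNNReal (1 - α ^ 2) := by
    ext
    simp [hσdef, Real.sq_sqrt (var_pos hα0 hα1).le, coe_var hα0 hα1]
    exact mul_one _
  rw [h2, h3, abs_of_pos hσ] at h1
  rw [div_eq_inv_mul t σ, h1]
  field_simp

omit hα0 hα1 in
lemma integrable_key :
    Integrable (fun t => gaussianPDFReal α (Real.toNNReal (1 - α ^ 2)) t
        * stdGaussianCDF (t / Real.sqrt (1 - α ^ 2)) ^ (n : ℕ)) := by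
  refine Integrable.mono' (g := gaussianPDFReal α (Real.toNNReal (1 - α ^ 2)))
    (integrable_gaussianPDFReal α _) ?_ (ae_of_all _ fun t => ?_)
  · exact ((measurable_gaussianPDFReal _ _).mul
      (((stdGaussianCDF_measurable).comp (measurable_id.div_const _)).pow_const _)).aestronglyMeasurable
  · rw [Real.norm_eq_abs, abs_of_nonneg (mul_nonneg (gaussianPDFReal_nonneg _ _ _)
      (pow_nonneg (stdGaussianCDF_nonneg _) _))]
    calc gaussianPDFReal α _ t * stdGaussianCDF (t / Real.sqrt (1 - α ^ 2)) ^ n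
        ≤ gaussianPDFReal α _ t * 1 := by
          refine mul_le_mul_of_nonneg_left ?_ (gaussianPDFReal_nonneg _ _ _)
          exact pow_le_one₀ (stdGaussianCDF_nonneg _) (stdGaussianCDF_le_one _)
      _ = _ := mul_one _

lemma pi_domSet_k (k : Fin (n + 1)) :
    Measure.pi (fun j : Fin (n+1) =>
        gaussianReal (if j = k then α else 0) (Real.toNNReal (1 - α ^ 2))) (domSet k)
      = ENNReal.ofReal
          (∫ z, stdGaussianPDF (z - α / Real.sqrt (1 - α ^ 2)) * stdGaussianCDF z ^ n) := by
  have hv := var_ne_zero hα0 hα1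
  have hσ := sqrt_var_pos hα0 hα1
  rw [pi_domSet_eq _ k]
  have hfac : ∀ (j : Fin n) (t : ℝ),
      gaussianReal (if k.succAbove j = k then α else 0) (Real.toNNReal (1 - α ^ 2)) (Set.Iio t)
        = ENNReal.ofReal (stdGaussianCDF (t / Real.sqrt (1 - α ^ 2))) := by
    intro j t
    rw [if_neg (Fin.succAbove_ne k j), gaussianReal_Iio 0 hv]
    congr 2
    rw [sub_zero]
    congr 1
    exact congrArg Real.sqrt (coe_var hα0 hα1)
  simp only [hfac, if_pos rfl, if_true, Finset.prod_const, Finset.card_univ, Fintype.card_fin]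
  have hgmeas : Measurable (fun t : ℝ =>
      ENNReal.ofReal (stdGaussianCDF (t / Real.sqrt (1 - α ^ 2))) ^ n) := by
    apply Measurable.pow_const
    apply Measurable.ennreal_ofReal
    exact stdGaussianCDF_measurable.comp (measurable_id.div_const _)
  rw [gaussianReal_of_var_ne_zero _ hv,
    lintegral_withDensity_eq_lintegral_mul _ (measurable_gaussianPDF _ _) hgmeas]
  have hptw : ∀ t : ℝ, (gaussianPDF α (Real.toNNReal (1 - α ^ 2))
        * fun t => ENNReal.ofReal (stdGaussianCDF (t / Real.sqrt (1 - α ^ 2))) ^ n) t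
      = ENNReal.ofReal (gaussianPDFReal α (Real.toNNReal (1 - α ^ 2)) t
          * stdGaussianCDF (t / Real.sqrt (1 - α ^ 2)) ^ n) := by
    intro t
    simp only [Pi.mul_apply, gaussianPDF]
    rw [ENNReal.ofReal_mul (gaussianPDFReal_nonneg _ _ _),
      ← ENNReal.ofReal_pow (stdGaussianCDF_nonneg _)]
  simp only [hptw]
  rw [← ofReal_integral_eq_lintegral_ofReal integrable_key
      (ae_of_all _ fun t => mul_nonneg (gaussianPDFReal_nonneg _ _ _)
        (pow_nonneg (stdGaussianCDF_nonneg _) _))]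
  congr 1
  have := integrand_key (n := n) hα0 hα1
  calc ∫ t, gaussianPDFReal α (Real.toNNReal (1 - α ^ 2)) t
        * stdGaussianCDF (t / Real.sqrt (1 - α ^ 2)) ^ n
      = ∫ t, (Real.sqrt (1 - α ^ 2))⁻¹ *
          ((fun z => stdGaussianPDF (z - α / Real.sqrt (1 - α ^ 2)) * stdGaussianCDF z ^ n)
            (t / Real.sqrt (1 - α ^ 2))) := by
        exact integral_congr_ae (ae_of_all _ this)
    _ = (Real.sqrt (1 - α ^ 2))⁻¹ * ∫ t,
          ((fun z => stdGaussianPDF (z - α / Real.sqrt (1 - α ^ 2)) * stdGaussianCDF z ^ n)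
            (t / Real.sqrt (1 - α ^ 2))) := integral_const_mul _ _
    _ = ∫ z, stdGaussianPDF (z - α / Real.sqrt (1 - α ^ 2)) * stdGaussianCDF z ^ n := by
        rw [MeasureTheory.Measure.integral_comp_div
          (fun z => stdGaussianPDF (z - α / Real.sqrt (1 - α ^ 2)) * stdGaussianCDF z ^ n)
          (Real.sqrt (1 - α ^ 2))]
        rw [abs_of_pos hσ, smul_eq_mul, ← mul_assoc, inv_mul_cancel₀ hσ.ne', one_mul]

end main


/-- **The Diffusion Duality, token level.**  The pushforward of the Gaussian marginal
`N(ᾱ e_k, (1-ᾱ²) I_K)` under the (least-index) argmax map is the Uniform-state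
categorical marginal `Cat(𝒯(ᾱ) e_k + (1 - 𝒯(ᾱ)) 𝟙/K)`. -/
theorem diffusion_duality_token (K : ℕ) (hK : 2 ≤ K) [NeZero K] (k : Fin K)
    (α : ℝ) (hα0 : 0 ≤ α) (hα1 : α < 1) (i : Fin K) :
    (Measure.map argmaxIdx
        (Measure.pi fun j : Fin K =>
          gaussianReal (if j = k then α else 0) (Real.toNNReal (1 - α ^ 2)))) {i}
      = ENNReal.ofReal
          (diffTransform K α * (if i = k then 1 else 0)
            + (1 - diffTransform K α) / (K : ℝ)) := by
  obtain ⟨n, rfl⟩ : ∃ n, K = n + 1 := ⟨K - 1, by omega⟩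
  have hn : 1 ≤ n := by omega
  set v := Real.toNNReal (1 - α ^ 2) with hvdef
  have hv : v ≠ 0 := var_ne_zero hα0 hα1
  set ν : Fin (n+1) → Measure ℝ := fun j => gaussianReal (if j = k then α else 0) v with hνdef
  haveI hprob : ∀ j, IsProbabilityMeasure (ν j) := fun j => by
    rw [hνdef]; infer_instance
  haveI : ∀ j, NullSingletonClass (ν j) := fun j => by
    rw [hνdef]; exact gaussianReal_noAtoms' hv
  haveI : IsProbabilityMeasure (Measure.pi ν) := by infer_instance
  -- the tie set is null
  set T : Set (Fin (n+1) → ℝ) :=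
    ⋃ (a : Fin (n+1)), ⋃ (b : Fin (n+1)), ⋃ (_ : a ≠ b), {w | w a = w b} with hTdef
  have hT : Measure.pi ν T = 0 := by
    refine measure_iUnion_null fun a => measure_iUnion_null fun b => measure_iUnion_null fun hab => ?_
    exact pi_tie_null ν hab
  have hTmem : ∀ w : Fin (n+1) → ℝ, w ∉ T → ∀ a b : Fin (n+1), a ≠ b → w a ≠ w b := by
    intro w hw a b hab
    intro hcon
    exact hw (Set.mem_iUnion.2 ⟨a, Set.mem_iUnion.2 ⟨b, Set.mem_iUnion.2 ⟨hab, hcon⟩⟩⟩)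
  -- measure of the argmax fiber equals measure of domSet
  have key : ∀ i' : Fin (n+1),
      Measure.pi ν (argmaxIdx ⁻¹' {i'}) = Measure.pi ν (domSet i') := by
    intro i'
    refine measure_congr (MeasureTheory.ae_eq_set.2 ⟨?_, ?_⟩)
    · refine measure_mono_null (fun w hw => ?_) hT
      simp only [Set.mem_diff, Set.mem_preimage, Set.mem_singleton_iff] at hw
      by_contra hwT
      exact hw.2 (hw.1 ▸ argmaxIdx_mem_domSet (hTmem w hwT))
    · refine measure_mono_null (fun w hw => ?_) hT
      simp only [Set.mem_diff, Set.mem_preimage, Set.mem_singleton_iff] at hw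
      exact absurd (argmaxIdx_eq_of_mem_domSet hw.1) hw.2
  rw [Measure.map_apply measurable_argmaxIdx (measurableSet_singleton i), key i]
  -- notation for the integral
  set I : ℝ := ∫ z, stdGaussianPDF (z - α / Real.sqrt (1 - α ^ 2)) * stdGaussianCDF z ^ n with hIdef
  have hI0 : 0 ≤ I :=
    integral_nonneg fun z => mul_nonneg (stdGaussianPDF_nonneg _)
      (pow_nonneg (stdGaussianCDF_nonneg _) _)
  have hk : Measure.pi ν (domSet k) = ENNReal.ofReal I := pi_domSet_k hα0 hα1 k
  have hTdiff : diffTransform (n+1) α = (((n:ℝ)+1) / (n:ℝ)) * (I - 1/((n:ℝ)+1)) := by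
    rw [diffTransform, hIdef]
    norm_num
  by_cases hik : i = k
  · subst hik
    rw [hk, if_pos rfl]
    congr 1
    rw [hTdiff]
    have hn0 : (n:ℝ) ≠ 0 := by positivity
    have hn1 : ((n:ℝ)+1) ≠ 0 := by positivity
    push_cast
    field_simp
    ring
  · -- symmetry: all non-k fibers have the same measure
    have hik' : i ≠ k := hik
    have hsym : ∀ i' : Fin (n+1), i' ≠ k → Measure.pi ν (domSet i') = Measure.pi ν (domSet i) := by
      intro i' hi'
      have hfix : ∀ j, ν (Equiv.swap i i' j) = ν j := by
        intro j
        rw [hνdef]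
        simp only
        congr 1
        by_cases hj : j = k
        · subst hj
          rw [Equiv.swap_apply_of_ne_of_ne (Ne.symm hik') (Ne.symm hi')]
        · rw [if_neg hj, if_neg]
          have hswapk : Equiv.swap i i' k = k :=
            Equiv.swap_apply_of_ne_of_ne (Ne.symm hik') (Ne.symm hi')
          intro hc
          exact hj ((Equiv.swap i i').injective (hc.trans hswapk.symm))
      have := pi_domSet_perm ν (Equiv.swap i i') hfix i
      rwa [Equiv.swap_apply_left] at this
    -- disjoint union has measure one
    have hdisj : Pairwise (Function.onFun Disjoint fun i' : Fin (n+1) => domSet i') := by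
      intro a b hab
      refine Set.disjoint_left.2 fun w hwa hwb => ?_
      exact absurd (hwa b (Ne.symm hab)) (not_lt.2 (hwb a hab).le)
    have hcover : Set.univ ⊆ (⋃ i', domSet i') ∪ T := by
      intro w _
      by_cases hwT : w ∈ T
      · exact Or.inr hwT
      · exact Or.inl (Set.mem_iUnion.2 ⟨argmaxIdx w, argmaxIdx_mem_domSet (hTmem w hwT)⟩)
    have hsum : ∑ i' : Fin (n+1), Measure.pi ν (domSet i') = 1 := by
      have hmu := measure_iUnion (μ := Measure.pi ν) hdisj fun i' => measurableSet_domSet i'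
      rw [tsum_fintype] at hmu
      rw [← hmu]
      refine le_antisymm prob_le_one ?_
      calc (1:ℝ≥0∞) = Measure.pi ν Set.univ := (measure_univ).symm
        _ ≤ Measure.pi ν ((⋃ i', domSet i') ∪ T) := measure_mono hcover
        _ ≤ Measure.pi ν (⋃ i', domSet i') + Measure.pi ν T := measure_union_le _ _
        _ = Measure.pi ν (⋃ i', domSet i') := by rw [hT, add_zero]
    -- rewrite the sum
    set q := Measure.pi ν (domSet i) with hq
    have hsum2 : ENNReal.ofReal I + (n : ℝ≥0∞) * q = 1 := by
      rw [← hsum, ← Finset.add_sum_erase _ _ (Finset.mem_univ k), hk]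
      congr 1
      rw [Finset.sum_congr rfl fun i' hi' => hsym i' (Finset.ne_of_mem_erase hi')]
      rw [Finset.sum_const, Finset.card_erase_of_mem (Finset.mem_univ k)]
      simp [nsmul_eq_mul]
    have hqfin : q ≠ ⊤ := measure_ne_top _ _
    have hqr : q.toReal = (1 - I) / n := by
      have := congrArg ENNReal.toReal hsum2
      rw [ENNReal.toReal_add (by simp) (ENNReal.mul_ne_top (by simp) hqfin),
        ENNReal.toReal_ofReal hI0, ENNReal.toReal_mul] at this
      simp only [ENNReal.toReal_natCast, ENNReal.toReal_one] at this
      have hn0 : (n:ℝ) ≠ 0 := by positivity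
      field_simp
      linarith
    rw [if_neg hik, mul_zero, zero_add, ← ENNReal.ofReal_toReal hqfin, hqr]
    congr 1
    rw [hTdiff]
    have hn0 : (n:ℝ) ≠ 0 := by positivity
    have hn1 : ((n:ℝ)+1) ≠ 0 := by positivity
    push_cast
    field_simp
    ring
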